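/- The total order ≺ on the positive roots Φ⁺ of type D_n defined by (a) ε_i+ε_j ≺ ε_k−ε_l, (b) ε_i+ε_j ≺ ε_k+ε_l iff (j > l) or (j = l and i > k), (c) ε_i−ε_j ≺ ε_k−ε_l iff (i < k) or (i = k and j < l), is convex: whenever γ, γ′, γ″ ∈ Φ⁺ satisfy γ′ = γ + γ″, either γ ≺ γ′ ≺ γ″ or γ″ ≺ γ′ ≺ γ. -/
import Mathlib


/-- Encoding of the positive roots of type `D_n`: a pair `(i,j)` with `i < j` together with
a sign (`true` for `ε_i + ε_j`, `false` for `ε_i - ε_j`). -/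
def PRoot (n : ℕ) := {p : (Fin n × Fin n) × Bool // p.1.1 < p.1.2}

/-- The vector in `ℤ^n` represented by a positive root. -/
def toVec {n : ℕ} (x : PRoot n) : Fin n → ℤ :=
  if x.1.2 = true then Pi.single x.1.1.1 1 + Pi.single x.1.1.2 1
  else Pi.single x.1.1.1 1 - Pi.single x.1.1.2 1

/-- The order `≺` of the paper. -/
def prLt {n : ℕ} (x y : PRoot n) : Prop :=
  (x.1.2 = true ∧ y.1.2 = false) ∨
  (x.1.2 = true ∧ y.1.2 = true ∧
    (y.1.1.2 < x.1.1.2 ∨ (x.1.1.2 = y.1.1.2 ∧ y.1.1.1 < x.1.1.1))) ∨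
  (x.1.2 = false ∧ y.1.2 = false ∧
    (x.1.1.1 < y.1.1.1 ∨ (x.1.1.1 = y.1.1.1 ∧ x.1.1.2 < y.1.1.2)))

/-- Nat-level version of `prLt`. -/
def natLt (s u : Bool) (i j a b : ℕ) : Prop :=
  (s = true ∧ u = false) ∨
  (s = true ∧ u = true ∧ (b < j ∨ (j = b ∧ a < i))) ∨
  (s = false ∧ u = false ∧ (i < a ∨ (i = a ∧ j < b)))

/-- The `m`-th coordinate of a (coded) root. -/
def coeff (x y : ℕ) (s : Bool) (m : ℕ) : ℤ :=
  (if m = x then 1 else 0) + (if m = y then (if s then 1 else -1) else 0)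

-- The combinatorial core: evaluating the relation `γ' = γ + γ''` at the six relevant
-- coordinates determines the ordering of the three roots.
set_option maxHeartbeats 1600000 in
lemma key (s t u : Bool) (i j k l a b : ℕ) (hij : i < j) (hkl : k < l) (hab : a < b)
    (E1 : coeff a b u i = coeff i j s i + coeff k l t i)
    (E2 : coeff a b u j = coeff i j s j + coeff k l t j)
    (E3 : coeff a b u k = coeff i j s k + coeff k l t k)
    (E4 : coeff a b u l = coeff i j s l + coeff k l t l)
    (E5 : coeff a b u a = coeff i j s a + coeff k l t a)
    (E6 : coeff a b u b = coeff i j s b + coeff k l t b) :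
    (natLt s u i j a b ∧ natLt u t a b k l) ∨
    (natLt t u k l a b ∧ natLt u s a b i j) := by
  cases s <;> cases t <;> cases u <;>
    simp only [coeff, natLt, if_true, if_false, Bool.false_eq_true, Bool.true_eq_false,
      and_true, true_and, and_false, false_and, or_false, false_or, and_self] at * <;>
    omega

lemma toVec_apply {n : ℕ} (x : PRoot n) (m : Fin n) :
    toVec x m = coeff x.1.1.1.val x.1.1.2.val x.1.2 m.val := by
  obtain ⟨⟨⟨i, j⟩, s⟩, hij⟩ := x
  unfold toVec coeff
  dsimp only
  simp only [Fin.val_eq_val]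
  cases s
  · rw [if_neg Bool.false_ne_true, Pi.sub_apply, Pi.single_apply, Pi.single_apply]
    simp only [Bool.false_eq_true, if_false]
    split_ifs <;> norm_num
  · rw [if_pos rfl, Pi.add_apply, Pi.single_apply, Pi.single_apply]
    simp only [if_pos rfl]
    split_ifs <;> norm_num

lemma prLt_iff {n : ℕ} (x y : PRoot n) :
    prLt x y ↔ natLt x.1.2 y.1.2 x.1.1.1.val x.1.1.2.val y.1.1.1.val y.1.1.2.val := by
  simp only [prLt, natLt, Fin.lt_def, Fin.ext_iff]

/-- The order `≺` is convex: if `γ' = γ + γ''` in `Φ⁺` then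
either `γ ≺ γ' ≺ γ''` or `γ'' ≺ γ' ≺ γ`. -/
theorem stmt3 (n : ℕ) (hn : 4 ≤ n) (γ γ' γ'' : PRoot n)
    (h : toVec γ' = toVec γ + toVec γ'') :
    (prLt γ γ' ∧ prLt γ' γ'') ∨ (prLt γ'' γ' ∧ prLt γ' γ) := by
  have H : ∀ m, toVec γ' m = toVec γ m + toVec γ'' m := fun m => congrFun h m
  simp only [toVec_apply] at H
  have hij := γ.2
  have hab := γ'.2
  have hkl := γ''.2
  rw [Fin.lt_def] at hij hab hkl
  have := key γ.1.2 γ''.1.2 γ'.1.2 γ.1.1.1.val γ.1.1.2.val γ''.1.1.1.val γ''.1.1.2.val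
    γ'.1.1.1.val γ'.1.1.2.val hij hkl hab
    (H γ.1.1.1) (H γ.1.1.2) (H γ''.1.1.1) (H γ''.1.1.2) (H γ'.1.1.1) (H γ'.1.1.2)
  rw [prLt_iff, prLt_iff, prLt_iff, prLt_iff]
  exact this
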